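/- arXiv:2306.03448 — 4 statements merged into one kernel-verified Lean document; each statement's English description precedes it below -/
import Mathlib

section
/- Let q ≥ 2, n, m̄, j be positive integers and p a prime with p not dividing q. Define f(j) := 1 + q^n + q^{2n} + ... + q^{n(m̄ - 1 + j)}. If p divides f(j), then for every positive integer k, p divides f(kj + (k-1)m̄). -/
theorem stmt2 (q n mb j : ℕ) (hq : 2 ≤ q) (hn : 0 < n) (hm : 0 < mb) (hj : 0 < j)
    (p : ℕ) (hp : p.Prime) (hpq : ¬ p ∣ q)
    (f : ℕ → ℕ) (hf : ∀ i, f i = ∑ t ∈ Finset.range (mb + i), q ^ (n * t))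
    (h : p ∣ f j) : ∀ k : ℕ, 0 < k → p ∣ f (k * j + (k - 1) * mb) := by
  rw [hf] at h
  have key : ∀ k : ℕ, p ∣ ∑ t ∈ Finset.range (k * (mb + j)), q ^ (n * t) := by
    intro k
    induction k with
    | zero => simp
    | succ k ih =>
      have : (k + 1) * (mb + j) = k * (mb + j) + (mb + j) := by ring
      rw [this, Finset.sum_range_add]
      refine dvd_add ih ?_
      have : ∑ i ∈ Finset.range (mb + j), q ^ (n * (k * (mb + j) + i))
          = q ^ (n * (k * (mb + j))) * ∑ t ∈ Finset.range (mb + j), q ^ (n * t) := by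
        rw [Finset.mul_sum]
        refine Finset.sum_congr rfl fun i _ => ?_
        rw [← pow_add]
        ring_nf
      rw [this]
      exact Dvd.dvd.mul_left h _
  intro k hk
  rw [hf]
  have : mb + (k * j + (k - 1) * mb) = k * (mb + j) := by
    cases k with
    | zero => omega
    | succ k => simp [Nat.succ_sub_one]; ring
  rw [this]
  exact key k
end

section
/- Let F = F_{q^n} be a finite field, let I < J < n be natural numbers, set K = J - I and A = q^{2K} + q^K + 1. Let α, β, γ ∈ F* be such that α·γ^{q^K}·β^{q^K + 1} is not an A-th power in F. Then for all nonzero u, v, w ∈ F, the system γβ·w^{q^I + q^J} = v^{q^I}·u^{q^J} and γ·u^{q^I}·w^{q^J} = α·v^{q^I + q^J} has no solution. -/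
theorem stmt5 (q n I J : ℕ) (hIJ : I < J) (hJn : J < n)
    (F : Type*) [Field F] [Fintype F] (hcard : Fintype.card F = q ^ n)
    (α β γ : F) (hα : α ≠ 0) (hβ : β ≠ 0) (hγ : γ ≠ 0)
    (hK : ¬ ∃ x : F, x ^ (q ^ (2 * (J - I)) + q ^ (J - I) + 1)
      = α * γ ^ (q ^ (J - I)) * β ^ (q ^ (J - I) + 1)) :
    ∀ u v w : F, u ≠ 0 → v ≠ 0 → w ≠ 0 →
      ¬ (γ * β * w ^ (q ^ I + q ^ J) = v ^ (q ^ I) * u ^ (q ^ J) ∧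
         γ * u ^ (q ^ I) * w ^ (q ^ J) = α * v ^ (q ^ I + q ^ J)) := by
  intro u v w hu hv hw ⟨h1, h2⟩
  set a := q ^ I with ha
  set k := q ^ (J - I) with hk
  have hJq : q ^ J = a * k := by rw [ha, hk, ← pow_add]; congr 1; omega
  have h2k : q ^ (2 * (J - I)) = k ^ 2 := by rw [hk, ← pow_mul, mul_comm]
  rw [hJq] at h1 h2
  apply hK
  refine ⟨(u / w) ^ a, ?_⟩
  rw [h2k]
  have hE : γ * (u ^ (a * (k ^ 2 + k + 1)) * w ^ (a * k))
      = γ * (α * γ ^ k * β ^ (k + 1) * w ^ (a * (k ^ 2 + k + 1)) * w ^ (a * k)) := by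
    calc γ * (u ^ (a * (k ^ 2 + k + 1)) * w ^ (a * k))
        = (γ * u ^ a * w ^ (a * k)) * (u ^ (a * k) * u ^ (a * k * k)) := by ring
      _ = (α * v ^ (a + a * k)) * (u ^ (a * k) * u ^ (a * k * k)) := by rw [h2]
      _ = α * ((v ^ a * u ^ (a * k)) * (v ^ a * u ^ (a * k)) ^ k) := by ring
      _ = α * ((γ * β * w ^ (a + a * k)) * (γ * β * w ^ (a + a * k)) ^ k) := by rw [h1]
      _ = γ * (α * γ ^ k * β ^ (k + 1) * w ^ (a * (k ^ 2 + k + 1)) * w ^ (a * k)) := by ring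
  have hE2 : u ^ (a * (k ^ 2 + k + 1))
      = α * γ ^ k * β ^ (k + 1) * w ^ (a * (k ^ 2 + k + 1)) :=
    mul_right_cancel₀ (pow_ne_zero _ hw) (mul_left_cancel₀ hγ hE)
  rw [div_pow, div_pow, div_eq_iff (pow_ne_zero _ (pow_ne_zero _ hw)), ← pow_mul u, ← pow_mul w]
  exact hE2
end

section
/- Let F = F_{q^n}, I < J < n, K = J - I, A = q^{2K} + q^K + 1, and α, β, γ ∈ F*. Suppose x, y, z ∈ F with x ≠ 0 satisfy simultaneously: x^{q^I + q^J} = αβ·y^{q^J}·z^{q^I}, βγ·z^{q^I + q^J} = x^{q^J}·y^{q^I}, and γ·x^{q^I}·z^{q^J} = α·y^{q^I + q^J}. If αγ^{q^K}β^{q^K+1} is not an A-th power in F, then no such (x, y, z) exists (i.e., these three equations are contradictory). -/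
theorem stmt13 (q n I J : ℕ) (hIJ : I < J) (hJn : J < n)
    (F : Type*) [Field F] [Fintype F] (hcard : Fintype.card F = q ^ n)
    (α β γ : F) (hα : α ≠ 0) (hβ : β ≠ 0) (hγ : γ ≠ 0)
    (hK : ¬ ∃ x : F, x ^ (q ^ (2 * (J - I)) + q ^ (J - I) + 1)
      = α * γ ^ (q ^ (J - I)) * β ^ (q ^ (J - I) + 1)) :
    ∀ x y z : F, x ≠ 0 →
      x ^ (q ^ I + q ^ J) = α * β * y ^ (q ^ J) * z ^ (q ^ I) →
      β * γ * z ^ (q ^ I + q ^ J) = x ^ (q ^ J) * y ^ (q ^ I) →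
      γ * x ^ (q ^ I) * z ^ (q ^ J) = α * y ^ (q ^ I + q ^ J) → False := by
  intro x y z hx h1 h2 h3
  have hq : q ≠ 0 := by
    rintro rfl
    have h2n : 1 < Fintype.card F := Fintype.one_lt_card
    rw [hcard] at h2n
    rw [Nat.zero_pow (by omega : 0 < n)] at h2n
    omega
  have hqI : q ^ I ≠ 0 := pow_ne_zero _ hq
  have hqJ : q ^ J ≠ 0 := pow_ne_zero _ hq
  have hxIJ : x ^ (q ^ I + q ^ J) ≠ 0 := pow_ne_zero _ hx
  have hz : z ≠ 0 := by
    rintro rfl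
    rw [zero_pow hqI, mul_zero] at h1
    exact hxIJ h1
  have hy : y ≠ 0 := by
    rintro rfl
    rw [zero_pow hqJ, mul_zero, zero_mul] at h1
    exact hxIJ h1
  apply hK
  set K := J - I with hKdef
  have hJeq : J = I + K := by omega
  refine ⟨x ^ (q ^ I) / z ^ (q ^ I), ?_⟩
  have hZ : z ^ (q ^ I) ≠ 0 := pow_ne_zero _ hz
  have hZA : (z ^ (q ^ I)) ^ (q ^ (2 * K) + q ^ K + 1) ≠ 0 := pow_ne_zero _ hZ
  rw [div_pow, div_eq_iff hZA]
  have epow : ∀ w : F, w ^ (q ^ J) = (w ^ (q ^ I)) ^ (q ^ K) := by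
    intro w
    rw [← pow_mul, ← pow_add, hJeq]
  have epow2 : ∀ w : F, w ^ (q ^ (2 * K)) = (w ^ (q ^ K)) ^ (q ^ K) := by
    intro w
    rw [← pow_mul, ← pow_add, two_mul]
  -- rewrite hypotheses in terms of X = x^(q^I) etc.
  rw [pow_add, epow x, epow y] at h1
  rw [pow_add, epow z, epow x] at h2
  have h2s := congrArg (· ^ (q ^ K)) h2
  simp only [mul_pow] at h2s
  set X := x ^ (q ^ I) with hX
  set Y := y ^ (q ^ I) with hY
  set Z := z ^ (q ^ I) with hZdef
  -- goal: X ^ (q^(2K)+q^K+1) = α * γ^(q^K) * β^(q^K+1) * Z ^ (q^(2K)+q^K+1)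
  simp only [pow_add, pow_one, epow2 X, epow2 Z]
  -- h1 : X * X^(q^K) = α * β * Y^(q^K) * Z
  -- h2s : (β*γ)^(q^K) * (Z^(q^K) * (Z^(q^K))^(q^K))... need care
  linear_combination ((X ^ (q ^ K)) ^ (q ^ K)) * h1 - α * β * Z * h2s
end

section
/- Let F = F_{q^n}, I < J < n, K = J - I, A = q^{2K} + q^K + 1, and α, β, γ ∈ F* with gcd(I, J, n) = 1 and αγ^{q^K}β^{q^K+1} not an A-th power in F_{q^n}. Then there exist infinitely many positive integers m such that αγ^{q^K}β^{q^K+1} is not an A-th power in F_{q^{nm}}. -/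
open Finset in
lemma aux_geom (a m : ℕ) (ha : 1 ≤ a) :
    (a - 1) * ∑ i ∈ range m, a ^ i = a ^ m - 1 := by
  have h := geom_sum_mul (a : ℤ) m
  have key : (((a - 1) * ∑ i ∈ range m, a ^ i : ℕ) : ℤ) = ((a ^ m - 1 : ℕ) : ℤ) := by
    push_cast [ha, Nat.one_le_pow m a ha]
    rw [mul_comm]; exact h
  exact_mod_cast key

open Finset in
lemma aux_block {R : Type} [CommRing R] (b : R) (τ : ℕ) (hb : b ^ τ = 1) (c : ℕ) :
    ∑ i ∈ range (c * τ), b ^ i = (c : R) * ∑ j ∈ range τ, b ^ j := by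
  induction c with
  | zero => simp
  | succ c ih =>
    rw [Nat.succ_mul, Finset.sum_range_add, ih]
    have : ∑ i ∈ range τ, b ^ (c * τ + i) = ∑ j ∈ range τ, b ^ j := by
      refine Finset.sum_congr rfl fun j _ => ?_
      rw [pow_add, mul_comm c τ, pow_mul, hb, one_pow, one_mul]
    rw [this]
    push_cast; ring

open Finset in
/-- Main field-theoretic step. -/
lemma aux_main (q n A : ℕ) (hq2 : 2 ≤ q) (hn : 0 < n) (hA : 0 < A) (m : ℕ)
    (hcop : Nat.Coprime A (∑ i ∈ range m, (q ^ n) ^ i))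
    (F : Type) [Field F] [Fintype F] (hcard : Fintype.card F = q ^ n)
    (a : F) (ha : a ≠ 0) (hK : ¬ ∃ x : F, x ^ A = a)
    (E : Type) [Field E] [Fintype E] (hE : Fintype.card E = q ^ (n * m))
    (φ : F →+* E) : ¬ ∃ x : E, x ^ A = φ a := by
  classical
  rintro ⟨x, hx⟩
  set d := q ^ n - 1 with hd_def
  set r := ∑ i ∈ range m, (q ^ n) ^ i with hr_def
  have hqn : 2 ≤ q ^ n := le_trans hq2 (Nat.le_self_pow hn.ne' q)
  have hd : 0 < d := by omega
  have hdr : d * r = q ^ (n * m) - 1 := by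
    rw [hd_def, hr_def, aux_geom (q ^ n) m (by omega), ← pow_mul]
  have hφa : φ a ≠ 0 := fun h => ha (by simpa using φ.injective (h.trans (map_zero φ).symm))
  have hx0 : x ≠ 0 := by
    rintro rfl
    rw [zero_pow hA.ne'] at hx
    exact hφa hx.symm
  -- units
  set X : Eˣ := Units.mk0 x hx0 with hX_def
  have hcardU : Fintype.card Eˣ = q ^ (n * m) - 1 := by
    rw [Fintype.card_units, hE]
  have hXN : X ^ (q ^ (n * m) - 1) = 1 := by rw [← hcardU]; exact pow_card_eq_one
  have had : a ^ d = 1 := by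
    rw [hd_def, ← hcard]; exact FiniteField.pow_card_sub_one_eq_one a ha
  have hXAd : (X ^ A) ^ d = 1 := by
    ext
    simp only [Units.val_pow_eq_pow_val, hX_def, Units.val_mk0, Units.val_one]
    rw [hx, ← map_pow, had, map_one]
  -- Bezout
  have hbez : (1 : ℤ) = A * Nat.gcdA A r + r * Nat.gcdB A r := by
    have := Nat.gcd_eq_gcd_ab A r
    rwa [hcop, Nat.cast_one] at this
  set s := Nat.gcdA A r
  set t := Nat.gcdB A r
  have hXd : X ^ d = 1 := by
    have h1 : (d : ℤ) = ((A * d : ℕ) : ℤ) * s + ((d * r : ℕ) : ℤ) * t := by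
      push_cast
      linear_combination (d : ℤ) * hbez
    have h2 : X ^ (d : ℤ) = (X ^ (A * d)) ^ s * (X ^ (d * r)) ^ t := by
      rw [h1, zpow_add, ← zpow_natCast X (A * d), ← zpow_natCast X (d * r),
        ← zpow_mul, ← zpow_mul]
    rw [pow_mul, hXAd, hdr, hXN, one_zpow, one_zpow, one_mul] at h2
    rw [← zpow_natCast X d, h2]
  have hxd : x ^ d = 1 := by
    have := congrArg (Units.val) hXd
    simpa [hX_def, Units.val_pow_eq_pow_val] using this
  -- the set of d-th roots of unity is exactly the image of Fˣ
  have hinj : Function.Injective (fun y : Fˣ => φ (y : F)) := by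
    intro y z h
    exact Units.ext (φ.injective h)
  set S : Finset E := Finset.image (fun y : Fˣ => φ (y : F)) Finset.univ with hS_def
  have hSsub : S ⊆ Polynomial.nthRootsFinset d (1 : E) := by
    intro z hz
    rw [hS_def, Finset.mem_image] at hz
    obtain ⟨y, -, rfl⟩ := hz
    rw [Polynomial.mem_nthRootsFinset hd, ← map_pow, hd_def, ← hcard,
      FiniteField.pow_card_sub_one_eq_one (y : F) y.ne_zero, map_one]
  have hScard : S.card = d := by
    rw [hS_def, Finset.card_image_of_injective _ hinj, Finset.card_univ,
      Fintype.card_units, hcard]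
  have hroots_card : (Polynomial.nthRootsFinset d (1 : E)).card ≤ d := by
    classical
    calc (Polynomial.nthRootsFinset d (1 : E)).card
        ≤ Multiset.card (Polynomial.nthRoots d (1 : E)) := by
          rw [Polynomial.nthRootsFinset_def]; exact Multiset.toFinset_card_le _
      _ ≤ d := Polynomial.card_nthRoots d 1
  have hSeq : S = Polynomial.nthRootsFinset d (1 : E) :=
    Finset.eq_of_subset_of_card_le hSsub (by rw [hScard]; exact hroots_card)
  have hxS : x ∈ S := by
    rw [hSeq, Polynomial.mem_nthRootsFinset hd]; exact hxd
  rw [hS_def, Finset.mem_image] at hxS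
  obtain ⟨y, -, hy⟩ := hxS
  refine hK ⟨(y : F), φ.injective ?_⟩
  rw [map_pow, hy, hx]

theorem stmt16 (q n I J : ℕ) (hq : IsPrimePow q) (hIJ : I < J) (hJn : J < n)
    (hgcd : Nat.gcd I (Nat.gcd J n) = 1)
    (F : Type) [Field F] [Fintype F] (hcard : Fintype.card F = q ^ n)
    (α β γ : F) (hα : α ≠ 0) (hβ : β ≠ 0) (hγ : γ ≠ 0)
    (hK : ¬ ∃ x : F, x ^ (q ^ (2 * (J - I)) + q ^ (J - I) + 1)
      = α * γ ^ (q ^ (J - I)) * β ^ (q ^ (J - I) + 1)) :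
    {m : ℕ | 0 < m ∧ ∀ (E : Type) [Field E] [Fintype E],
        Fintype.card E = q ^ (n * m) → ∀ φ : F →+* E,
        ¬ ∃ x : E, x ^ (q ^ (2 * (J - I)) + q ^ (J - I) + 1)
          = φ (α * γ ^ (q ^ (J - I)) * β ^ (q ^ (J - I) + 1))}.Infinite := by
  classical
  have hq2 : 2 ≤ q := hq.two_le
  have hn : 0 < n := by omega
  set K := J - I with hKdef
  have hK1 : 0 < K := by omega
  set A := q ^ (2 * K) + q ^ K + 1 with hA_def
  have hA3 : 3 ≤ A := by
    have h1 : 2 ≤ q ^ K := le_trans hq2 (Nat.le_self_pow hK1.ne' q)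
    have h2 : 1 ≤ q ^ (2 * K) := Nat.one_le_pow _ _ (by omega)
    omega
  have hA : 0 < A := by omega
  -- A is coprime to q
  have hAq : Nat.Coprime A q := by
    have hdvd : q ∣ q ^ (2 * K) + q ^ K :=
      dvd_add (dvd_pow_self q (by omega)) (dvd_pow_self q hK1.ne')
    obtain ⟨c, hc⟩ := hdvd
    rw [Nat.coprime_comm, hA_def, hc, mul_comm q c]
    exact (Nat.coprime_mul_right_add_right q 1 c).mpr (Nat.coprime_one_right q)
  have hAqn : Nat.Coprime (q ^ n) A := (Nat.Coprime.pow_left n hAq.symm)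
  set τ := Nat.totient A with hτ_def
  have hτ : 0 < τ := Nat.totient_pos.mpr hA
  set T := A * τ with hT_def
  have hT : 0 < T := Nat.mul_pos hA hτ
  -- Euler
  have heuler : ((q : ZMod A) ^ n) ^ τ = 1 := by
    have h := Nat.ModEq.pow_totient hAqn
    have := (ZMod.natCast_eq_natCast_iff _ _ _).mpr h
    push_cast at this
    exact this
  set a := α * γ ^ (q ^ K) * β ^ (q ^ K + 1) with ha_def
  have ha : a ≠ 0 := mul_ne_zero (mul_ne_zero hα (pow_ne_zero _ hγ)) (pow_ne_zero _ hβ)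
  refine Set.infinite_of_injective_forall_mem
    (f := fun k : ℕ => 1 + k * T) ?_ ?_
  · intro k1 k2 h
    simp only at h
    exact Nat.eq_of_mul_eq_mul_right hT (by omega)
  · intro k
    simp only [Set.mem_setOf_eq]
    constructor
    · omega
    · -- coprimality of A with the geometric sum
      set m := 1 + k * T with hm_def
      have hsum : ((∑ i ∈ Finset.range m, (q ^ n) ^ i : ℕ) : ZMod A) = 1 := by
        push_cast
        rw [hm_def, Finset.sum_range_add]
        have h2 : ∑ i ∈ Finset.range (k * T), ((q : ZMod A) ^ n) ^ (1 + i)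
            = (q : ZMod A) ^ n * ∑ i ∈ Finset.range (k * T), ((q : ZMod A) ^ n) ^ i := by
          rw [Finset.mul_sum]
          exact Finset.sum_congr rfl fun i _ => by rw [pow_add, pow_one]
        rw [h2, hT_def, ← mul_assoc, aux_block _ τ heuler (k * A)]
        have hz : ((k * A : ℕ) : ZMod A) = 0 := by
          rw [Nat.cast_mul, ZMod.natCast_self, mul_zero]
        rw [hz, zero_mul, mul_zero, add_zero]
        simp
      have hrpos : 0 < ∑ i ∈ Finset.range m, (q ^ n) ^ i := by
        apply Finset.sum_pos
        · intro i _
          exact pow_pos (pow_pos (by omega) n) i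
        · exact ⟨0, Finset.mem_range.mpr (by omega)⟩
      have hcop : Nat.Coprime A (∑ i ∈ Finset.range m, (q ^ n) ^ i) := by
        set r := ∑ i ∈ Finset.range m, (q ^ n) ^ i
        have hmod : r ≡ 1 [MOD A] := by
          rw [← Nat.cast_one (R := ZMod A)] at hsum
          exact (ZMod.natCast_eq_natCast_iff _ _ _).mp hsum
        have hdvd : A ∣ r - 1 := (Nat.modEq_iff_dvd' hrpos).mp hmod.symm
        have hg : Nat.gcd A r ∣ 1 := by
          have h1 : Nat.gcd A r ∣ r - 1 := dvd_trans (Nat.gcd_dvd_left _ _) hdvd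
          have h2 : Nat.gcd A r ∣ r := Nat.gcd_dvd_right _ _
          have := Nat.dvd_sub h2 h1
          rwa [Nat.sub_sub_self hrpos] at this
        exact Nat.eq_one_of_dvd_one hg
      intro E _ _ hE φ
      exact aux_main q n A hq2 hn hA m hcop F hcard a ha hK E hE φ
end
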